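/- Let a ∈ (-1,0) ∪ (0,1] and let M = (M₁,M₂,M₃) : ℝ → ℝ³ be a differentiable solution of the system Ṁ₁ = M₂M₃ + (3/(1+a))·sign(a)·M₂, Ṁ₂ = -M₁M₃ - (3(1+a)/(4|a|))·M₁, Ṁ₃ = (1/(4a²) - 1/(a(1+a)²))·M₁M₂. Then the functions t ↦ (M₁(t)² + M₂(t)²)/(2|a|(1+a)) + 3M₃(t) and t ↦ M₁(t)²/(4a²) + M₂(t)²/(a(1+a)²) - M₃(t)² are constant. -/

import Mathlib

open Real

/-- Case (F), `SL(2,ℝ)` with parameter `a ∈ (-1,0) ∪ (0,1]`: the Lie–Poisson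
system has the two conserved quantities
`(M₁² + M₂²)/(2|a|(1+a)) + 3M₃` (twice the Hamiltonian, up to a constant) and
`M₁²/(4a²) + M₂²/(a(1+a)²) - M₃²` (the Casimir function). -/
theorem stmt_8 (a : ℝ) (ha : a ∈ Set.Ioo (-1 : ℝ) 0 ∪ Set.Ioc (0 : ℝ) 1)
    (M₁ M₂ M₃ : ℝ → ℝ)
    (h₁ : ∀ t, HasDerivAt M₁
      (M₂ t * M₃ t + (3 / (1 + a)) * Real.sign a * M₂ t) t)
    (h₂ : ∀ t, HasDerivAt M₂
      (-(M₁ t * M₃ t) - (3 * (1 + a) / (4 * |a|)) * M₁ t) t)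
    (h₃ : ∀ t, HasDerivAt M₃
      ((1 / (4 * a ^ 2) - 1 / (a * (1 + a) ^ 2)) * M₁ t * M₂ t) t) :
    (∀ t : ℝ,
      (M₁ t ^ 2 + M₂ t ^ 2) / (2 * |a| * (1 + a)) + 3 * M₃ t
        = (M₁ 0 ^ 2 + M₂ 0 ^ 2) / (2 * |a| * (1 + a)) + 3 * M₃ 0) ∧
    (∀ t : ℝ,
      M₁ t ^ 2 / (4 * a ^ 2) + M₂ t ^ 2 / (a * (1 + a) ^ 2) - M₃ t ^ 2
        = M₁ 0 ^ 2 / (4 * a ^ 2) + M₂ 0 ^ 2 / (a * (1 + a) ^ 2) - M₃ 0 ^ 2) := by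
  have ha0 : a ≠ 0 := by
    rcases ha with h | h
    · exact ne_of_lt h.2
    · exact ne_of_gt h.1
  have ha1 : 1 + a ≠ 0 := by
    rcases ha with h | h
    · nlinarith [h.1]
    · nlinarith [h.1]
  have key : ∀ (f : ℝ → ℝ), (∀ u, HasDerivAt f 0 u) → ∀ t : ℝ, f t = f 0 := by
    intro f hf t
    exact is_const_of_deriv_eq_zero (fun u => (hf u).differentiableAt)
      (fun u => (hf u).deriv) t 0
  constructor
  · refine key (fun t => (M₁ t ^ 2 + M₂ t ^ 2) / (2 * |a| * (1 + a)) + 3 * M₃ t) ?_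
    intro u
    have h := ((((h₁ u).pow 2).add ((h₂ u).pow 2)).div_const (2 * |a| * (1 + a))).add
      ((h₃ u).const_mul 3)
    refine h.congr_deriv ?_
    rcases ha with hc | hc
    · rw [abs_of_neg hc.2, Real.sign_of_neg hc.2]
      field_simp
      ring
    · rw [abs_of_pos hc.1, Real.sign_of_pos hc.1]
      field_simp
      ring
  · refine key (fun t => M₁ t ^ 2 / (4 * a ^ 2) + M₂ t ^ 2 / (a * (1 + a) ^ 2) - M₃ t ^ 2) ?_
    intro u
    have h := ((((h₁ u).pow 2).div_const (4 * a ^ 2)).add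
      (((h₂ u).pow 2).div_const (a * (1 + a) ^ 2))).sub ((h₃ u).pow 2)
    refine h.congr_deriv ?_
    rcases ha with hc | hc
    · rw [abs_of_neg hc.2, Real.sign_of_neg hc.2]
      field_simp
      ring
    · rw [abs_of_pos hc.1, Real.sign_of_pos hc.1]
      field_simp
      ring
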